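/- Let G be a group. For every positive integer n, λ̄_n(G) = N_{n,1}(G). -/

import Mathlib

/-- `H^m`: the subgroup generated by the `m`-th powers of elements of `H`. -/
def sPow {G : Type*} [Group G] (H : Subgroup G) (m : ℕ) : Subgroup G :=
  Subgroup.closure ((fun h => h ^ m) '' (H : Set G))

/-- `γ_n(G)`, the lower central series indexed so that `γ_1(G) = G`. -/
def gamma (G : Type*) [Group G] (n : ℕ) : Subgroup G :=
  (⊤ : Subgroup G).lowerCentralSeries (n - 1)

/-- `N_{n,k}(G) = γ_k(G)^{4^{n-k}} ⋯ γ_n(G)` (product of normal subgroups = join). -/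
def Nnk (G : Type*) [Group G] (n k : ℕ) : Subgroup G :=
  ⨆ i ∈ Finset.Icc k n, sPow (gamma G i) (4 ^ (n - i))

/-- The `λ̄`-series: `λ̄_1(G) = G`, `λ̄_{n+1}(G) = λ̄_n(G)^4 [λ̄_n(G), G]`. -/
def lambdaBar (G : Type*) [Group G] : ℕ → Subgroup G
  | 0 => ⊤
  | 1 => ⊤
  | (n + 2) => sPow (lambdaBar G (n + 1)) 4 ⊔ ⁅lambdaBar G (n + 1), (⊤ : Subgroup G)⁆

/-- The lower `p`-central series: `λ_1(G) = G`, `λ_{n+1}(G) = λ_n(G)^p [λ_n(G), G]`. -/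
def lowP (G : Type*) [Group G] (p : ℕ) : ℕ → Subgroup G
  | 0 => ⊤
  | 1 => ⊤
  | (n + 2) => sPow (lowP G p (n + 1)) p ⊔ ⁅lowP G p (n + 1), (⊤ : Subgroup G)⁆

/-- `Ω_i(G)`: subgroup generated by elements of order dividing `p^i`. -/
def Omega (G : Type*) [Group G] (p i : ℕ) : Subgroup G :=
  Subgroup.closure {x : G | x ^ p ^ i = 1}

/-- A finite `p`-group is `p`-central if `Ω_1(G) ≤ Z(G)` for odd `p`,
resp. `Ω_2(G) ≤ Z(G)` for `p = 2`. -/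
def IsPCentral (p : ℕ) (G : Type*) [Group G] : Prop :=
  if p = 2 then Omega G 2 2 ≤ Subgroup.center G else Omega G p 1 ≤ Subgroup.center G

instance gamma_normal (G : Type*) [Group G] (n : ℕ) : (gamma G n).Normal :=
  inferInstanceAs ((⊤ : Subgroup G).lowerCentralSeries (n - 1)).Normal

instance sPow_normal {G : Type*} [Group G] (H : Subgroup G) [hH : H.Normal] (m : ℕ) :
    (sPow H m).Normal := by
  constructor
  intro x hx g
  induction hx using Subgroup.closure_induction with
  | mem y hy =>
    obtain ⟨h, hh, rfl⟩ := hy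
    exact Subgroup.subset_closure ⟨g * h * g⁻¹, hH.conj_mem h hh g, by
      simp [conj_pow]⟩
  | one => simpa using (sPow H m).one_mem
  | mul a b _ _ ha hb =>
    have : g * (a * b) * g⁻¹ = (g * a * g⁻¹) * (g * b * g⁻¹) := by group
    rw [this]; exact (sPow H m).mul_mem ha hb
  | inv a _ ha =>
    have : g * a⁻¹ * g⁻¹ = (g * a * g⁻¹)⁻¹ := by group
    rw [this]; exact (sPow H m).inv_mem ha

theorem normal_iSup {G : Type*} [Group G] {ι : Sort*} (f : ι → Subgroup G)
    (h : ∀ i, (f i).Normal) : (⨆ i, f i).Normal := by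
  constructor
  intro x hx g
  refine Subgroup.iSup_induction f (C := fun y => g * y * g⁻¹ ∈ ⨆ i, f i) hx
    (fun i y hy => Subgroup.mem_iSup_of_mem i ((h i).conj_mem y hy g)) (by simpa using Subgroup.one_mem (⨆ i, f i)) ?_
  intro a b ha hb
  have : g * (a * b) * g⁻¹ = (g * a * g⁻¹) * (g * b * g⁻¹) := by group
  rw [this]; exact Subgroup.mul_mem _ ha hb

instance Nnk_normal (G : Type*) [Group G] (n k : ℕ) : (Nnk G n k).Normal :=
  normal_iSup _ fun i => normal_iSup _ fun _ => inferInstance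

instance lambdaBar_normal (G : Type*) [Group G] : ∀ n, (lambdaBar G n).Normal
  | 0 => inferInstanceAs (⊤ : Subgroup G).Normal
  | 1 => inferInstanceAs (⊤ : Subgroup G).Normal
  | (n + 2) => by
    haveI := lambdaBar_normal G (n + 1)
    exact inferInstanceAs
      (sPow (lambdaBar G (n + 1)) 4 ⊔ ⁅lambdaBar G (n + 1), (⊤ : Subgroup G)⁆).Normal

instance lowP_normal (G : Type*) [Group G] (p : ℕ) : ∀ n, (lowP G p n).Normal
  | 0 => inferInstanceAs (⊤ : Subgroup G).Normal
  | 1 => inferInstanceAs (⊤ : Subgroup G).Normal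
  | (n + 2) => by
    haveI := lowP_normal G p (n + 1)
    exact inferInstanceAs
      (sPow (lowP G p (n + 1)) p ⊔ ⁅lowP G p (n + 1), (⊤ : Subgroup G)⁆).Normal
open scoped commutatorElement

section AuxLemmas

open Subgroup

variable {G : Type*} [Group G]

theorem mem_sPow {H : Subgroup G} {x : G} (hx : x ∈ H) (m : ℕ) : x ^ m ∈ sPow H m :=
  Subgroup.subset_closure ⟨x, hx, rfl⟩

theorem sPow_le {H K : Subgroup G} {m : ℕ} (h : ∀ x ∈ H, x ^ m ∈ K) : sPow H m ≤ K := by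
  refine (Subgroup.closure_le K).mpr ?_
  rintro _ ⟨x, hx, rfl⟩
  exact h x hx

theorem sPow_one (H : Subgroup G) : sPow H 1 = H := by
  refine le_antisymm (sPow_le fun x hx => by simpa using hx) (fun x hx => ?_)
  simpa using mem_sPow hx 1

theorem term_le_Nnk {n k j : ℕ} (hj : j ∈ Finset.Icc k n) :
    sPow (gamma G j) (4 ^ (n - j)) ≤ Nnk G n k :=
  le_iSup₂ (f := fun i (_ : i ∈ Finset.Icc k n) => sPow (gamma G i) (4 ^ (n - i))) j hj

theorem Nnk_mono_k {n k k' : ℕ} (h : k' ≤ k) : Nnk G n k ≤ Nnk G n k' :=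
  biSup_mono fun j hj => by
    rw [Finset.mem_Icc] at *
    omega

theorem gamma_one_eq_top : gamma G 1 = ⊤ := rfl

theorem commutator_mem_gamma_succ {i : ℕ} (hi : 1 ≤ i) {x : G} (hx : x ∈ gamma G i) (g : G) :
    ⁅x, g⁆ ∈ gamma G (i + 1) := by
  obtain ⟨i', rfl⟩ : ∃ i', i = i' + 1 := ⟨i - 1, by omega⟩
  show ⁅x, g⁆ ∈ (⊤ : Subgroup G).lowerCentralSeries (i' + 1)
  have h : (⊤ : Subgroup G).lowerCentralSeries (i' + 1) = ⁅(⊤ : Subgroup G).lowerCentralSeries i', ⊤⁆ := rfl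
  rw [h]
  exact Subgroup.commutator_mem_commutator hx (Subgroup.mem_top g)

theorem commutator_pow_eq {y g : G} (h : ⁅y, g⁆ ∈ Subgroup.center G) (k : ℕ) :
    ⁅y ^ k, g⁆ = ⁅y, g⁆ ^ k := by
  induction k with
  | zero => simp [commutatorElement_def]
  | succ k ih =>
    have key : ⁅y ^ (k + 1), g⁆ = y * ⁅y ^ k, g⁆ * y⁻¹ * ⁅y, g⁆ := by
      simp only [commutatorElement_def, pow_succ']
      group
    have hc : y * ⁅y, g⁆ ^ k = ⁅y, g⁆ ^ k * y :=
      Subgroup.mem_center_iff.mp (Subgroup.pow_mem _ h k) y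
    calc ⁅y ^ (k + 1), g⁆ = y * ⁅y ^ k, g⁆ * y⁻¹ * ⁅y, g⁆ := key
      _ = y * ⁅y, g⁆ ^ k * y⁻¹ * ⁅y, g⁆ := by rw [ih]
      _ = ⁅y, g⁆ ^ k * y * y⁻¹ * ⁅y, g⁆ := by rw [hc]
      _ = ⁅y, g⁆ ^ k * ⁅y, g⁆ := by group
      _ = ⁅y, g⁆ ^ (k + 1) := by rw [pow_succ]

/-- The subgroup of elements whose image under `π` is central with fourth power trivial. -/
def centerPow4 {H : Type*} [Group H] (π : G →* H) : Subgroup G where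
  carrier := {a | π a ∈ Subgroup.center H ∧ (π a) ^ 4 = 1}
  one_mem' := by simp [Subgroup.one_mem]
  mul_mem' := by
    rintro a b ⟨ha, ha4⟩ ⟨hb, hb4⟩
    have hc : π a * π b = π b * π a := (Subgroup.mem_center_iff.mp ha (π b)).symm
    refine ⟨by rw [map_mul]; exact Subgroup.mul_mem _ ha hb, ?_⟩
    rw [map_mul, (show Commute (π a) (π b) from hc).mul_pow, ha4, hb4, one_mul]
  inv_mem' := by
    rintro a ⟨ha, ha4⟩
    refine ⟨by rw [map_inv]; exact Subgroup.inv_mem _ ha, ?_⟩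
    rw [map_inv, inv_pow, ha4, inv_one]

theorem mem_centerPow4 {H : Type*} [Group H] (π : G →* H) (a : G) :
    a ∈ centerPow4 π ↔ π a ∈ Subgroup.center H ∧ (π a) ^ 4 = 1 := Iff.rfl

theorem map_lcs_surj {H : Type*} [Group H] {π : G →* H} (hπ : Function.Surjective π) :
    ∀ m, ((⊤ : Subgroup G).lowerCentralSeries m).map π = (⊤ : Subgroup H).lowerCentralSeries m
  | 0 => by simpa using Subgroup.map_top_of_surjective π hπ
  | (m + 1) => by
    have h1 : (⊤ : Subgroup G).lowerCentralSeries (m + 1) = ⁅(⊤ : Subgroup G).lowerCentralSeries m, ⊤⁆ := rfl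
    have h2 : (⊤ : Subgroup H).lowerCentralSeries (m + 1) = ⁅(⊤ : Subgroup H).lowerCentralSeries m, ⊤⁆ := rfl
    rw [h1, h2, Subgroup.map_commutator, map_lcs_surj hπ m,
      Subgroup.map_top_of_surjective π hπ]

theorem map_gamma_surj {H : Type*} [Group H] {π : G →* H} (hπ : Function.Surjective π)
    (i : ℕ) : (gamma G i).map π = gamma H i :=
  map_lcs_surj hπ (i - 1)

end AuxLemmas

universe u

/-- Companion statement S: commutator of a `4^r`-th power lies deep in the `N` filtration. -/
def Sstat (r : ℕ) : Prop :=
  ∀ (G : Type u) [Group G], ∀ i : ℕ, 1 ≤ i → ∀ x ∈ gamma G i, ∀ g : G,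
    ⁅x ^ 4 ^ r, g⁆ ∈ Nnk G (i + r + 1) (i + 1)

/-- Companion statement R: in a group with suitable exponent conditions on the
lower central series, suitable powers are central. -/
def Rstat (r : ℕ) : Prop :=
  ∀ (Q : Type u) [Group Q], ∀ i : ℕ, 1 ≤ i →
    (∀ j ∈ Finset.Icc (i + 1) (i + r + 2), ∀ y ∈ gamma Q j, y ^ 4 ^ (i + r + 2 - j) = 1) →
    ∀ x ∈ gamma Q i, ∀ g : Q, ⁅x ^ 4 ^ (r + 1), g⁆ = 1

theorem SR : ∀ r : ℕ, Sstat.{u} r ∧ Rstat.{u} r := by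
  intro r
  induction r using Nat.strong_induction_on with
  | _ r IH =>
  have hS : Sstat.{u} r := by
    match r, IH with
    | 0, _ =>
      intro G _ i hi x hx g
      have h1 : ⁅x, g⁆ ∈ gamma G (i + 1) := commutator_mem_gamma_succ hi hx g
      have h2 : sPow (gamma G (i + 1)) (4 ^ ((i + 0 + 1) - (i + 1))) ≤ Nnk G (i + 0 + 1) (i + 1) :=
        term_le_Nnk (by rw [Finset.mem_Icc]; omega)
      rw [show (i + 0 + 1) - (i + 1) = 0 from by omega, pow_zero, sPow_one] at h2
      simpa using h2 h1
    | (r' + 1), IH =>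
      intro G _ i hi x hx g
      set T := Nnk G (i + (r' + 1) + 1) (i + 1) with hT
      let π := QuotientGroup.mk' T
      have hπ : Function.Surjective π := QuotientGroup.mk'_surjective T
      have hker : ∀ a : G, a ∈ T → π a = 1 := fun a ha => (QuotientGroup.eq_one_iff a).mpr ha
      have hyp : ∀ j ∈ Finset.Icc (i + 1) (i + r' + 2), ∀ y ∈ gamma (G ⧸ T) j,
          y ^ 4 ^ (i + r' + 2 - j) = 1 := by
        intro j hj y hy
        rw [← map_gamma_surj hπ j, Subgroup.mem_map] at hy
        obtain ⟨y₀, hy₀, rfl⟩ := hy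
        rw [← map_pow]
        refine hker _ ?_
        have hle : sPow (gamma G j) (4 ^ ((i + (r' + 1) + 1) - j)) ≤ T :=
          term_le_Nnk (by rw [Finset.mem_Icc] at *; omega)
        have : (i + (r' + 1) + 1) - j = i + r' + 2 - j := by omega
        rw [this] at hle
        exact hle (mem_sPow hy₀ _)
      have hxQ : π x ∈ gamma (G ⧸ T) i := by
        rw [← map_gamma_surj hπ i]
        exact Subgroup.mem_map_of_mem π hx
      have hR' := (IH r' (Nat.lt_succ_self r')).2 (G ⧸ T) i hi hyp (π x) hxQ (π g)
      have : π ⁅x ^ 4 ^ (r' + 1), g⁆ = 1 := by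
        rw [map_commutatorElement, map_pow]
        exact hR'
      exact (QuotientGroup.eq_one_iff _).mp this
  refine ⟨hS, ?_⟩
  intro Q _ i hi hyp x hx g
  -- the auxiliary central subgroup A
  have hA : Nnk Q (i + r + 1) (i + 1) ≤ centerPow4 (MonoidHom.id Q) := by
    refine iSup_le fun j => iSup_le fun hj => ?_
    rw [Finset.mem_Icc] at hj
    refine sPow_le fun y hy => ?_
    rw [mem_centerPow4]
    simp only [MonoidHom.id_apply]
    constructor
    · -- centrality of y ^ 4 ^ (i + r + 1 - j)
      rcases eq_or_lt_of_le hj.2 with heq | hlt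
      · -- j = i + r + 1
        rw [Subgroup.mem_center_iff]
        intro q
        have h1 : ⁅y ^ 4 ^ (i + r + 1 - j), q⁆ ∈ gamma Q (j + 1) :=
          commutator_mem_gamma_succ (by omega) (Subgroup.pow_mem _ hy _) q
        have h2 : ⁅y ^ 4 ^ (i + r + 1 - j), q⁆ ^ 4 ^ (i + r + 2 - (j + 1)) = 1 :=
          hyp (j + 1) (by rw [Finset.mem_Icc]; omega) _ h1
        rw [show i + r + 2 - (j + 1) = 0 from by omega, pow_zero, pow_one] at h2
        exact (commutatorElement_eq_one_iff_mul_comm.mp h2).symm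
      · -- j ≤ i + r : use Rstat (i + r - j)
        have hr' : i + r - j < r := by omega
        have hyp' : ∀ j' ∈ Finset.Icc (j + 1) (j + (i + r - j) + 2), ∀ y' ∈ gamma Q j',
            y' ^ 4 ^ (j + (i + r - j) + 2 - j') = 1 := by
          intro j' hj' y' hy'
          rw [Finset.mem_Icc] at hj'
          rw [show j + (i + r - j) + 2 - j' = i + r + 2 - j' from by omega]
          exact hyp j' (by rw [Finset.mem_Icc]; omega) y' hy'
        have hRj := (IH (i + r - j) hr').2 Q j (by omega) hyp' y hy
        rw [Subgroup.mem_center_iff]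
        intro q
        have := hRj q
        rw [show i + r - j + 1 = i + r + 1 - j from by omega] at this
        exact (commutatorElement_eq_one_iff_mul_comm.mp this).symm
    · -- fourth power triviality
      rw [← pow_mul, ← pow_succ, show i + r + 1 - j + 1 = i + r + 2 - j from by omega]
      exact hyp j (by rw [Finset.mem_Icc]; omega) y hy
  -- conclude
  have hz : ⁅x ^ 4 ^ r, g⁆ ∈ Nnk Q (i + r + 1) (i + 1) := hS Q i hi x hx g
  obtain ⟨hzc, hz4⟩ := (mem_centerPow4 _ _).mp (hA hz)
  simp only [MonoidHom.id_apply] at hzc hz4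
  have hsplit : x ^ 4 ^ (r + 1) = (x ^ 4 ^ r) ^ 4 := by
    rw [← pow_mul, ← pow_succ]
  rw [hsplit, commutator_pow_eq hzc 4, hz4]

theorem stmt_2 (G : Type*) [Group G] (n : ℕ) (hn : 1 ≤ n) :
    lambdaBar G n = Nnk G n 1 := by
  obtain ⟨m, rfl⟩ : ∃ m, n = m + 1 := ⟨n - 1, by omega⟩
  clear hn
  induction m with
  | zero =>
    have h1 : lambdaBar G 1 = ⊤ := rfl
    have h2 : sPow (gamma G 1) (4 ^ (1 - 1)) ≤ Nnk G 1 1 :=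
      term_le_Nnk (by rw [Finset.mem_Icc]; omega)
    rw [show (1 : ℕ) - 1 = 0 from rfl, pow_zero, sPow_one, gamma_one_eq_top] at h2
    rw [h1]
    exact le_antisymm h2 le_top
  | succ m ih =>
    have hlam : lambdaBar G (m + 1 + 1) =
        sPow (lambdaBar G (m + 1)) 4 ⊔ ⁅lambdaBar G (m + 1), (⊤ : Subgroup G)⁆ := rfl
    rw [hlam, ih]
    let π := QuotientGroup.mk' (Nnk G (m + 1 + 1) 1)
    have hπs : Function.Surjective π := QuotientGroup.mk'_surjective _
    have hker : ∀ a : G, a ∈ Nnk G (m + 1 + 1) 1 → π a = 1 := fun a ha =>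
      (QuotientGroup.eq_one_iff a).mpr ha
    have key : Nnk G (m + 1) 1 ≤ centerPow4 π := by
      refine iSup_le fun j => iSup_le fun hj => ?_
      rw [Finset.mem_Icc] at hj
      refine sPow_le fun x hx => ?_
      rw [mem_centerPow4]
      constructor
      · rw [Subgroup.mem_center_iff]
        intro q
        obtain ⟨g, rfl⟩ := hπs q
        have hSj := (SR (m + 1 - j)).1 G j hj.1 x hx g
        rw [show j + (m + 1 - j) + 1 = m + 1 + 1 from by omega] at hSj
        have hmem : ⁅x ^ 4 ^ (m + 1 - j), g⁆ ∈ Nnk G (m + 1 + 1) 1 :=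
          Nnk_mono_k (by omega) hSj
        have hone : π ⁅x ^ 4 ^ (m + 1 - j), g⁆ = 1 := hker _ hmem
        rw [map_commutatorElement] at hone
        exact (commutatorElement_eq_one_iff_mul_comm.mp hone).symm
      · rw [← map_pow, ← pow_mul, ← pow_succ,
          show m + 1 - j + 1 = m + 1 + 1 - j from by omega]
        exact hker _ (term_le_Nnk (by rw [Finset.mem_Icc]; omega) (mem_sPow hx _))
    refine le_antisymm (sup_le ?_ ?_) ?_
    · refine sPow_le fun a ha => ?_
      have h4 := ((mem_centerPow4 π a).mp (key ha)).2
      rw [← map_pow] at h4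
      exact (QuotientGroup.eq_one_iff _).mp h4
    · rw [Subgroup.commutator_le]
      intro a ha g _
      have hc := ((mem_centerPow4 π a).mp (key ha)).1
      have hone : π ⁅a, g⁆ = 1 := by
        rw [map_commutatorElement]
        exact commutatorElement_eq_one_iff_mul_comm.mpr
          (Subgroup.mem_center_iff.mp hc (π g)).symm
      exact (QuotientGroup.eq_one_iff _).mp hone
    · refine iSup_le fun j => iSup_le fun hj => ?_
      rw [Finset.mem_Icc] at hj
      rcases eq_or_lt_of_le hj.2 with heq | hlt
      · subst heq
        have e1 : sPow (gamma G (m + 1 + 1)) (4 ^ (m + 1 + 1 - (m + 1 + 1))) =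
            gamma G (m + 1 + 1) := by
          rw [Nat.sub_self, pow_zero, sPow_one]
        rw [e1]
        have e2 : gamma G (m + 1 + 1) = ⁅gamma G (m + 1), (⊤ : Subgroup G)⁆ := rfl
        rw [e2]
        refine le_trans (Subgroup.commutator_mono ?_ le_rfl) le_sup_right
        have h3 : sPow (gamma G (m + 1)) (4 ^ (m + 1 - (m + 1))) ≤ Nnk G (m + 1) 1 :=
          term_le_Nnk (by rw [Finset.mem_Icc]; omega)
        rwa [Nat.sub_self, pow_zero, sPow_one] at h3
      · refine le_trans (sPow_le fun x hx => ?_) le_sup_left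
        rw [show m + 1 + 1 - j = m + 1 - j + 1 from by omega, pow_succ, pow_mul]
        exact mem_sPow (term_le_Nnk (by rw [Finset.mem_Icc]; omega) (mem_sPow hx _)) 4
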